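/- For all x > 0, the inequality (1/2)·(sinh x - 2 sinh(x/2))/(x · sinh²(x/2)) ≤ 1/4 holds. -/

import Mathlib

open Real

lemma sinh_le_mul_cosh {u : ℝ} (hu : 0 ≤ u) : Real.sinh u ≤ u * Real.cosh u := by
  have hderiv : ∀ t : ℝ, HasDerivAt (fun s => s * Real.cosh s - Real.sinh s)
      (t * Real.sinh t) t := by
    intro t
    have h1 := ((hasDerivAt_id t).mul (Real.hasDerivAt_cosh t)).sub (Real.hasDerivAt_sinh t)
    refine (h1 : HasDerivAt (fun s => s * Real.cosh s - Real.sinh s) _ t).congr_deriv ?_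
    simp only [id_eq]
    ring
  have mono : MonotoneOn (fun s => s * Real.cosh s - Real.sinh s) (Set.Ici 0) := by
    apply monotoneOn_of_deriv_nonneg (convex_Ici 0)
    · exact (Continuous.sub (continuous_id.mul Real.continuous_cosh) Real.continuous_sinh).continuousOn
    · intro t _
      exact (hderiv t).differentiableAt.differentiableWithinAt
    · intro t ht
      rw [(hderiv t).deriv]
      rw [interior_Ici] at ht
      have : 0 ≤ Real.sinh t := (Real.sinh_pos_iff.mpr ht).le
      exact mul_nonneg (le_of_lt ht) this
  have h := mono (Set.self_mem_Ici) (Set.mem_Ici.mpr hu) hu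
  simp only [Real.sinh_zero, Real.cosh_zero, zero_mul, sub_zero] at h
  linarith [h]

theorem stmt_7 (x : ℝ) (hx : 0 < x) :
    (1 / 2) * (Real.sinh x - 2 * Real.sinh (x / 2)) / (x * Real.sinh (x / 2) ^ 2)
      ≤ 1 / 4 := by
  have hu : 0 < x / 4 := by linarith
  have hs : 0 < Real.sinh (x / 4) := Real.sinh_pos_iff.mpr hu
  have hc : 1 ≤ Real.cosh (x / 4) := Real.one_le_cosh _
  have hkey : Real.sinh (x / 4) ≤ (x / 4) * Real.cosh (x / 4) := sinh_le_mul_cosh hu.le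
  have hsq : Real.cosh (x / 4) ^ 2 - Real.sinh (x / 4) ^ 2 = 1 := Real.cosh_sq_sub_sinh_sq _
  have e1 := Real.sinh_two_mul (x / 4)
  have e2 := Real.cosh_two_mul (x / 4)
  rw [show 2 * (x / 4) = x / 2 by ring] at e1 e2
  have e3 := Real.sinh_two_mul (x / 2)
  have e4 := Real.cosh_two_mul (x / 2)
  rw [show 2 * (x / 2) = x by ring] at e3 e4
  have hs2 : 0 < Real.sinh (x / 2) := Real.sinh_pos_iff.mpr (by linarith)
  have hden : 0 < x * Real.sinh (x / 2) ^ 2 := by positivity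
  rw [div_le_div_iff₀ hden (by norm_num : (0:ℝ) < 4)]
  rw [e3, e1, e2]
  have hc0 : 0 < Real.cosh (x / 4) := by linarith
  nlinarith [mul_le_mul_of_nonneg_left hkey
      (mul_nonneg (mul_nonneg hs.le hs.le) hc0.le),
    mul_pos (mul_pos hs hs) hs, mul_pos hs hc0, sq_nonneg (Real.sinh (x/4) * Real.cosh (x/4))]
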